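/- Let T > 0, K > 0 and T_d > K be fixed real numbers. Define, for ρ > 0, γ(ρ) = (KρT + T_d)/(ρT(T_d − K)) and α*(ρ) = −γ(ρ) + √(γ(ρ)(γ(ρ) + 1)). Then as ρ → ∞, α*(ρ) converges to √K/(√T_d + √K). -/

import Mathlib

open Filter

/-- For fixed `T > 0`, `K > 0`, `T_d > K`, with
`γ(ρ) = (KρT + T_d)/(ρT(T_d-K))` and `α*(ρ) = -γ(ρ) + √(γ(ρ)(γ(ρ)+1))`,
the optimal training fraction `α*(ρ)` converges to `√K/(√T_d + √K)` as `ρ → ∞`. -/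
theorem optimal_alpha_high_snr_limit (T K Td : ℝ) (hT : 0 < T) (hK : 0 < K)
    (hTd : K < Td) :
    Tendsto
      (fun ρ : ℝ =>
        -((K * ρ * T + Td) / (ρ * T * (Td - K))) +
          Real.sqrt (((K * ρ * T + Td) / (ρ * T * (Td - K))) *
            (((K * ρ * T + Td) / (ρ * T * (Td - K))) + 1)))
      atTop (nhds (Real.sqrt K / (Real.sqrt Td + Real.sqrt K))) := by
  have hTdK : 0 < Td - K := by linarith
  set c : ℝ := K / (Td - K) with hc
  -- γ tends to c
  have hγ : Tendsto (fun ρ : ℝ => (K * ρ * T + Td) / (ρ * T * (Td - K))) atTop (nhds c) := by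
    have h1 : Tendsto (fun ρ : ℝ => c + (Td / (T * (Td - K))) * ρ⁻¹) atTop
        (nhds (c + (Td / (T * (Td - K))) * 0)) :=
      tendsto_const_nhds.add (tendsto_const_nhds.mul tendsto_inv_atTop_zero)
    rw [mul_zero, add_zero] at h1
    refine h1.congr' ?_
    filter_upwards [eventually_gt_atTop 0] with ρ hρ
    rw [hc]
    field_simp
  -- continuity of the outer function
  have hcont : Continuous fun x : ℝ => -x + Real.sqrt (x * (x + 1)) :=
    continuous_neg.add ((continuous_id.mul (continuous_id.add continuous_const)).sqrt)
  have hcomp := (hcont.tendsto c).comp hγ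
  have hval : -c + Real.sqrt (c * (c + 1)) = Real.sqrt K / (Real.sqrt Td + Real.sqrt K) := by
    have hsK : Real.sqrt K ^ 2 = K := Real.sq_sqrt hK.le
    have hsTd : Real.sqrt Td ^ 2 = Td := Real.sq_sqrt (by linarith : (0:ℝ) ≤ Td)
    have h2 : c * (c + 1) = K * Td / (Td - K)^2 := by
      rw [hc, eq_div_iff (by positivity)]
      field_simp
      ring
    have hsq : Real.sqrt (c * (c + 1)) = Real.sqrt K * Real.sqrt Td / (Td - K) := by
      rw [show c * (c + 1) = (Real.sqrt K * Real.sqrt Td / (Td - K))^2 by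
        rw [div_pow, mul_pow, hsK, hsTd]; exact h2]
      exact Real.sqrt_sq (by positivity)
    rw [hsq, hc]
    have hpos : 0 < Real.sqrt Td + Real.sqrt K := by positivity
    field_simp
    linear_combination Real.sqrt Td * hsK + Real.sqrt K * hsTd
  rw [← hval]
  exact hcomp
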